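/- The Conditional-Median mechanism is 5-approximate for the max cost: for every facility-location instance, if (w₁,w₂) is the output of the Conditional-Median mechanism, then for every feasible solution (y₁,y₂) one has MC(w₁,w₂) ≤ 5 · MC(y₁,y₂). -/

import Mathlib

open Finset

/-- The smallest element of `C` minimizing the distance to `p`. -/
noncomputable def tloc (C : Finset ℝ) (p : ℝ) : ℝ :=
  ((C.filter fun c => ∀ c' ∈ C, |p - c| ≤ |p - c'|).min).untopD 0

/-- The smallest element of `C \ {tloc C p}` minimizing the distance to `p`. -/
noncomputable def sloc (C : Finset ℝ) (p : ℝ) : ℝ :=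
  tloc (C.erase (tloc C p)) p

/-- The `⌈n/2⌉`-th smallest element of a multiset of reals (0 if empty). -/
noncomputable def medOf (l : Multiset ℝ) : ℝ :=
  (l.sort (· ≤ ·)).getD ((Multiset.card l + 1) / 2 - 1) 0

/-- The median position of the agents in `S` with positions `x`. -/
noncomputable def medianPos (S : Finset ℕ) (x : ℕ → ℝ) : ℝ :=
  medOf (S.val.map x)

/-- The Conditional-Median mechanism, assuming facility 1 is (weakly) more popular. -/
noncomputable def condMedian (x : ℕ → ℝ) (N1 N2 : Finset ℕ) (C : Finset ℝ) : ℝ × ℝ :=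
  if (N1 ∩ N2).card ≤ (N1 \ N2).card then
    let m1 := medianPos (N1 \ N2) x
    let m2 := medianPos N2 x
    let w1 := tloc C m1
    (w1, if tloc C m2 ≠ w1 then tloc C m2 else sloc C m2)
  else
    let m12 := medianPos (N1 ∩ N2) x
    (tloc C m12, sloc C m12)

/-- The output of the Conditional-Median mechanism (roles swapped if `|N₂| > |N₁|`). -/
noncomputable def mechOutput (x : ℕ → ℝ) (N1 N2 : Finset ℕ) (C : Finset ℝ) : ℝ × ℝ :=
  if N2.card ≤ N1.card then condMedian x N1 N2 C
  else (condMedian x N2 N1 C).swap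

/-- The cost of agent `i` at solution `y`: the distance to the farthest approved facility. -/
noncomputable def cost (x : ℕ → ℝ) (N1 N2 : Finset ℕ) (i : ℕ) (y : ℝ × ℝ) : ℝ :=
  if i ∈ N1 then
    if i ∈ N2 then max |x i - y.1| |x i - y.2| else |x i - y.1|
  else |x i - y.2|

/-- The social cost. -/
noncomputable def SC (x : ℕ → ℝ) (N1 N2 N : Finset ℕ) (y : ℝ × ℝ) : ℝ :=
  ∑ i ∈ N, cost x N1 N2 i y

/-- The max cost. -/
noncomputable def MC (x : ℕ → ℝ) (N1 N2 N : Finset ℕ) (hN : N.Nonempty) (y : ℝ × ℝ) : ℝ :=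
  N.sup' hN fun i => cost x N1 N2 i y

lemma tloc_spec (C : Finset ℝ) (hC : C.Nonempty) (p : ℝ) :
    tloc C p ∈ C ∧ ∀ c ∈ C, |p - tloc C p| ≤ |p - c| := by
  obtain ⟨c₀, hc₀, hmin⟩ := C.exists_min_image (fun c => |p - c|) hC
  have hFne : (C.filter fun c => ∀ c' ∈ C, |p - c| ≤ |p - c'|).Nonempty :=
    ⟨c₀, Finset.mem_filter.mpr ⟨hc₀, hmin⟩⟩
  have htl : tloc C p = (C.filter fun c => ∀ c' ∈ C, |p - c| ≤ |p - c'|).min' hFne := by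
    rw [tloc, ← Finset.coe_min' hFne]; rfl
  have hmem := Finset.min'_mem _ hFne
  rw [htl]
  exact ⟨(Finset.mem_filter.mp hmem).1, (Finset.mem_filter.mp hmem).2⟩

lemma medianPos_mem (S : Finset ℕ) (x : ℕ → ℝ) (hS : S.Nonempty) :
    ∃ j ∈ S, x j = medianPos S x := by
  have hlen : ((S.val.map x).sort (· ≤ ·)).length = S.card := by simp
  have hcard : Multiset.card (S.val.map x) = S.card := by simp
  have hpos : 1 ≤ S.card := Finset.card_pos.mpr hS
  have hidx : (Multiset.card (S.val.map x) + 1) / 2 - 1 <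
      ((S.val.map x).sort (· ≤ ·)).length := by rw [hlen, hcard]; omega
  have hmem : medianPos S x ∈ (S.val.map x).sort (· ≤ ·) := by
    rw [medianPos, medOf, List.getD_eq_getElem _ _ hidx]
    exact List.getElem_mem _
  have hmem2 : medianPos S x ∈ S.val.map x := (Multiset.mem_sort _).mp hmem
  obtain ⟨j, hj, hxj⟩ := Multiset.mem_map.mp hmem2
  exact ⟨j, hj, hxj⟩

lemma condMedian_bound (x : ℕ → ℝ) (N1 N2 : Finset ℕ) (C : Finset ℝ)
    (h1 : N1.Nonempty) (h2 : N2.Nonempty) (hC : 2 ≤ C.card)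
    (y1 y2 : ℝ) (hy1 : y1 ∈ C) (hy2 : y2 ∈ C) (hy : y1 ≠ y2)
    (B : ℝ)
    (hA1 : ∀ i ∈ N1, |x i - y1| ≤ B) (hA2 : ∀ i ∈ N2, |x i - y2| ≤ B) :
    (∀ i ∈ N1, |x i - (condMedian x N1 N2 C).1| ≤ 5 * B) ∧
    (∀ i ∈ N2, |x i - (condMedian x N1 N2 C).2| ≤ 5 * B) := by
  obtain ⟨i₀, hi₀⟩ := h1
  have hB : 0 ≤ B := (abs_nonneg _).trans (hA1 i₀ hi₀)
  have Cne : C.Nonempty := Finset.card_pos.mp (by omega)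
  by_cases h : (N1 ∩ N2).card ≤ (N1 \ N2).card
  · -- Case A
    have hsd : (N1 \ N2).Nonempty := by
      rcases Finset.eq_empty_or_nonempty (N1 \ N2) with he | hne
      · exfalso
        have hsub : N1 ⊆ N2 := Finset.sdiff_eq_empty_iff_subset.mp he
        have heq : N1 ∩ N2 = N1 := Finset.inter_eq_left.mpr hsub
        have hp : 0 < N1.card := Finset.card_pos.mpr ⟨i₀, hi₀⟩
        rw [heq, he] at h
        simp only [Finset.card_empty] at h
        omega
      · exact hne
    obtain ⟨j1, hj1, hxj1⟩ := medianPos_mem (N1 \ N2) x hsd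
    set m1 := medianPos (N1 \ N2) x with hm1
    set m2 := medianPos N2 x with hm2
    set w1 := tloc C m1 with hw1
    obtain ⟨hw1C, hw1min⟩ := tloc_spec C Cne m1
    have hm1y1 : |m1 - y1| ≤ B := by
      rw [← hxj1]; exact hA1 j1 (Finset.mem_sdiff.mp hj1).1
    have hm1w1 : |m1 - w1| ≤ B := (hw1min y1 hy1).trans hm1y1
    have hw1y1 : |w1 - y1| ≤ 2 * B := by
      have := abs_sub_le w1 m1 y1
      rw [abs_sub_comm w1 m1] at this
      linarith
    have HN1 : ∀ i ∈ N1, |x i - w1| ≤ 5 * B := by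
      intro i hi
      have := abs_sub_le (x i) y1 w1
      rw [abs_sub_comm y1 w1] at this
      have := hA1 i hi
      linarith
    obtain ⟨j2, hj2, hxj2⟩ := medianPos_mem N2 x h2
    have hm2y2 : |m2 - y2| ≤ B := by rw [hm2, ← hxj2]; exact hA2 j2 hj2
    have key : ∀ w2 : ℝ, |m2 - w2| ≤ 3 * B → ∀ i ∈ N2, |x i - w2| ≤ 5 * B := by
      intro w2 hw2 i hi
      have t1 := abs_sub_le (x i) m2 w2
      have t2 := abs_sub_le (x i) y2 m2
      rw [abs_sub_comm y2 m2] at t2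
      have := hA2 i hi
      linarith
    have hcm : condMedian x N1 N2 C =
        (w1, if tloc C m2 ≠ w1 then tloc C m2 else sloc C m2) := by
      rw [condMedian, if_pos h]
    rw [hcm]
    refine ⟨HN1, ?_⟩
    simp only
    by_cases hne : tloc C m2 ≠ w1
    · rw [if_pos hne]
      obtain ⟨_, hmin2⟩ := tloc_spec C Cne m2
      exact key _ (by have := (hmin2 y2 hy2).trans hm2y2; linarith) 
    · rw [if_neg hne]
      push_neg at hne
      have hm2w1 : |m2 - w1| ≤ B := by
        rw [← hne]
        obtain ⟨_, hminC2⟩ := tloc_spec C Cne m2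
        exact (hminC2 y2 hy2).trans hm2y2
      have hEne : (C.erase w1).Nonempty := by
        rw [← Finset.card_pos, Finset.card_erase_of_mem hw1C]; omega
      have hsl : sloc C m2 = tloc (C.erase w1) m2 := by rw [sloc, hne]
      obtain ⟨_, hmin2⟩ := tloc_spec (C.erase w1) hEne m2
      rw [hsl]
      apply key
      by_cases hy2w : y2 = w1
      · have hy1w : y1 ≠ w1 := fun hh => hy (hh.trans hy2w.symm)
        have hy1e : y1 ∈ C.erase w1 := Finset.mem_erase.mpr ⟨hy1w, hy1⟩
        have t1 := hmin2 y1 hy1e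
        have t2 := abs_sub_le m2 y2 y1
        rw [hy2w] at t2
        linarith
      · have hy2e : y2 ∈ C.erase w1 := Finset.mem_erase.mpr ⟨hy2w, hy2⟩
        have := (hmin2 y2 hy2e).trans hm2y2
        linarith
  · -- Case B
    have hine : (N1 ∩ N2).Nonempty := by
      rw [← Finset.card_pos]; omega
    obtain ⟨j, hj, hxj⟩ := medianPos_mem (N1 ∩ N2) x hine
    set m := medianPos (N1 ∩ N2) x with hm
    have hmy1 : |m - y1| ≤ B := by
      rw [← hxj]; exact hA1 j (Finset.mem_inter.mp hj).1
    have hmy2 : |m - y2| ≤ B := by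
      rw [← hxj]; exact hA2 j (Finset.mem_inter.mp hj).2
    set w1 := tloc C m with hw1
    obtain ⟨hw1C, hw1min⟩ := tloc_spec C Cne m
    have hmw1 : |m - w1| ≤ B := (hw1min y1 hy1).trans hmy1
    have hEne : (C.erase w1).Nonempty := by
      rw [← Finset.card_pos, Finset.card_erase_of_mem hw1C]; omega
    obtain ⟨_, hw2min⟩ := tloc_spec (C.erase w1) hEne m
    have hmw2 : |m - sloc C m| ≤ B := by
      rw [sloc, ← hw1]
      by_cases hy1w : y1 = w1
      · have hy2w : y2 ≠ w1 := fun hh => hy (hy1w.trans hh.symm)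
        exact (hw2min y2 (Finset.mem_erase.mpr ⟨hy2w, hy2⟩)).trans hmy2
      · exact (hw2min y1 (Finset.mem_erase.mpr ⟨hy1w, hy1⟩)).trans hmy1
    have hcm : condMedian x N1 N2 C = (w1, sloc C m) := by
      rw [condMedian, if_neg h]
    rw [hcm]
    constructor
    · intro i hi
      have t1 := abs_sub_le (x i) m w1
      have t2 := abs_sub_le (x i) y1 m
      rw [abs_sub_comm y1 m] at t2
      have := hA1 i hi
      simp only
      linarith
    · intro i hi
      have t1 := abs_sub_le (x i) m (sloc C m)
      have t2 := abs_sub_le (x i) y2 m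
      rw [abs_sub_comm y2 m] at t2
      have := hA2 i hi
      simp only
      linarith

lemma MC_le_of (x : ℕ → ℝ) (N1 N2 N : Finset ℕ) (hN : N.Nonempty)
    (hU : N1 ∪ N2 = N) (p : ℝ × ℝ) (b : ℝ)
    (H1 : ∀ i ∈ N1, |x i - p.1| ≤ b) (H2 : ∀ i ∈ N2, |x i - p.2| ≤ b) :
    MC x N1 N2 N hN p ≤ b := by
  apply Finset.sup'_le
  intro i hi
  have hiu : i ∈ N1 ∪ N2 := hU ▸ hi
  unfold cost
  split_ifs with hA hB
  · exact max_le (H1 i hA) (H2 i hB)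
  · exact H1 i hA
  · rcases Finset.mem_union.mp hiu with h | h
    · exact absurd h hA
    · exact H2 i h

/-- The Conditional-Median mechanism is 5-approximate for the max cost. -/
theorem conditionalMedian_maxCost_five_approx
    (N N1 N2 : Finset ℕ) (x : ℕ → ℝ) (C : Finset ℝ)
    (hN : N.Nonempty) (h1 : N1.Nonempty) (h2 : N2.Nonempty)
    (hU : N1 ∪ N2 = N) (hC : 2 ≤ C.card)
    (y1 y2 : ℝ) (hy1 : y1 ∈ C) (hy2 : y2 ∈ C) (hy : y1 ≠ y2) :
    MC x N1 N2 N hN (mechOutput x N1 N2 C) ≤ 5 * MC x N1 N2 N hN (y1, y2) := by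
  set OPT := MC x N1 N2 N hN (y1, y2) with hOPT
  have hA1 : ∀ i ∈ N1, |x i - y1| ≤ OPT := by
    intro i hi
    have hiN : i ∈ N := hU ▸ Finset.mem_union_left _ hi
    have hle : |x i - y1| ≤ cost x N1 N2 i (y1, y2) := by
      by_cases hB : i ∈ N2
      · simp only [cost, if_pos hi, if_pos hB]
        exact le_max_left _ _
      · simp only [cost, if_pos hi, if_neg hB]
        exact le_rfl
    refine hle.trans ?_
    rw [hOPT, MC]
    exact Finset.le_sup' (fun j => cost x N1 N2 j (y1, y2)) hiN
  have hA2 : ∀ i ∈ N2, |x i - y2| ≤ OPT := by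
    intro i hi
    have hiN : i ∈ N := hU ▸ Finset.mem_union_right _ hi
    have hle : |x i - y2| ≤ cost x N1 N2 i (y1, y2) := by
      by_cases hA : i ∈ N1
      · simp only [cost, if_pos hA, if_pos hi]
        exact le_max_right _ _
      · simp only [cost, if_neg hA]
        exact le_rfl
    refine hle.trans ?_
    rw [hOPT, MC]
    exact Finset.le_sup' (fun j => cost x N1 N2 j (y1, y2)) hiN
  by_cases hsw : N2.card ≤ N1.card
  · have hout : mechOutput x N1 N2 C = condMedian x N1 N2 C := by
      rw [mechOutput, if_pos hsw]
    obtain ⟨P1, P2⟩ := condMedian_bound x N1 N2 C h1 h2 hC y1 y2 hy1 hy2 hy OPT hA1 hA2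
    rw [hout]
    exact MC_le_of x N1 N2 N hN hU _ _ P1 P2
  · have hout : mechOutput x N1 N2 C = (condMedian x N2 N1 C).swap := by
      rw [mechOutput, if_neg hsw]
    obtain ⟨P1, P2⟩ := condMedian_bound x N2 N1 C h2 h1 hC y2 y1 hy2 hy1 hy.symm OPT hA2 hA1
    rw [hout]
    exact MC_le_of x N1 N2 N hN hU _ _ (fun i hi => P2 i hi) (fun i hi => P1 i hi)
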